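/- arXiv:gr-qc/0410070 — 3 statements merged into one kernel-verified Lean document; each statement's English description precedes it below -/
import Mathlib

section
/- Let T be a bilinear form on ℝ^N whose boost order with respect to a null frame is at most zero, i.e. all components of positive boost weight vanish: T_{00} = T_{0i} = T_{i0} = 0 for all spatial i. If T^{(2)}_{ac} T^{(2)ac} = 0 and T_{ab} T^{ba} = 0, where T^{(2)}_{ac} = T_{ab} T_c{}^{b} and indices are raised with η, then all boost-weight-zero components vanish as well: T_{01} = T_{10} = 0 and T_{ij} = 0 for all spatial i, j; that is, T has negative boost order along ℓ. -/
open Matrix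

/-! Null-frame formalism: we work with the components of tensors with respect to a
null frame `e_0 = ℓ, e_1 = n, e_2 = m_2, …, e_{N−1} = m_{N−1}` for the Minkowski
form `η` on `ℝ^N` (so `η(ℓ,n) = 1`, `η(m_i,m_j) = δ_{ij}`, all other frame products
vanish).  `ηnf N` is the matrix of frame components `η_{AB}`, and `ηup N = (ηnf N)⁻¹`
is the matrix of the inverse-metric components `η^{AB}` used to raise indices.
Spatial indices are those `i : Fin N` with `2 ≤ i`. -/

/-- Frame components `η_{AB}` of the Minkowski form in a null frame. -/
def ηnf (N : ℕ) : Matrix (Fin N) (Fin N) ℝ :=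
  Matrix.of fun A B =>
    if ((A : ℕ) = 0 ∧ (B : ℕ) = 1) ∨ ((A : ℕ) = 1 ∧ (B : ℕ) = 0) then 1
    else if A = B ∧ 2 ≤ (A : ℕ) then 1 else 0

/-- Components `η^{AB}` of the inverse metric in a null frame. -/
noncomputable def ηup (N : ℕ) : Matrix (Fin N) (Fin N) ℝ := (ηnf N)⁻¹

/-- The boost weight of a null-frame index: `+1` for the index `0` (the `ℓ` slot),
`−1` for the index `1` (the `n` slot), `0` for spatial indices. -/
def bw {N : ℕ} (A : Fin N) : ℤ :=
  if (A : ℕ) = 0 then 1 else if (A : ℕ) = 1 then -1 else 0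


/-- The square of a rank-2 tensor with one index raised:
`T⁽²⁾_{ac} = T_{ab} T_c{}^b = T_{ab} η^{bb'} T_{cb'}`. -/
noncomputable def sq2 (N : ℕ) (T : Fin N → Fin N → ℝ) : Fin N → Fin N → ℝ :=
  fun a c => ∑ b, ∑ b', T a b * ηup N b b' * T c b'

lemma eta_apply {N : ℕ} (hN : 2 ≤ N) (A B : Fin N) :
    ηnf N A B = if Equiv.swap (⟨0, Nat.lt_of_lt_of_le Nat.zero_lt_two hN⟩ : Fin N) ⟨1, Nat.lt_of_lt_of_le Nat.one_lt_two hN⟩ A = B then 1 else 0 := by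
  simp only [ηnf, Matrix.of_apply, Equiv.swap_apply_def]
  by_cases hA0 : (A:ℕ) = 0 <;> by_cases hA1 : (A:ℕ) = 1 <;>
  by_cases hB0 : (B:ℕ) = 0 <;> by_cases hB1 : (B:ℕ) = 1 <;>
    simp_all [Fin.ext_iff] <;> grind

lemma eta_mul_self {N : ℕ} (hN : 2 ≤ N) : ηnf N * ηnf N = 1 := by
  ext A C
  rw [Matrix.mul_apply]
  simp only [eta_apply hN, Matrix.one_apply, ite_mul, one_mul, zero_mul,
    Finset.sum_ite_eq, Finset.mem_univ, if_true]
  rw [Equiv.swap_apply_self]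

lemma etaup_eq {N : ℕ} (hN : 2 ≤ N) : ηup N = ηnf N :=
  Matrix.inv_eq_right_inv (eta_mul_self hN)

lemma sum_etaup_mul {N : ℕ} (hN : 2 ≤ N) (g : Fin N → ℝ) (b : Fin N) :
    ∑ b', ηup N b b' * g b' = g (Equiv.swap (⟨0, Nat.lt_of_lt_of_le Nat.zero_lt_two hN⟩ : Fin N) ⟨1, Nat.lt_of_lt_of_le Nat.one_lt_two hN⟩ b) := by
  simp only [etaup_eq hN, eta_apply hN, ite_mul, one_mul, zero_mul,
    Finset.sum_ite_eq, Finset.mem_univ, if_true]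

lemma sq2_eq {N : ℕ} (hN : 2 ≤ N) (T : Fin N → Fin N → ℝ) (a c : Fin N) :
    sq2 N T a c = ∑ b, T a b * T c (Equiv.swap (⟨0, Nat.lt_of_lt_of_le Nat.zero_lt_two hN⟩ : Fin N) ⟨1, Nat.lt_of_lt_of_le Nat.one_lt_two hN⟩ b) := by
  unfold sq2
  refine Finset.sum_congr rfl fun b _ => ?_
  rw [← sum_etaup_mul hN (fun x => T c x) b, Finset.mul_sum]
  exact Finset.sum_congr rfl fun b' _ => by ring

lemma quad1 {N : ℕ} (hN : 2 ≤ N) (U : Fin N → Fin N → ℝ) :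
    (∑ a, ∑ c, ∑ a', ∑ c', U a c * ηup N a a' * ηup N c c' * U a' c')
    = ∑ a, ∑ c, U a c *
        U (Equiv.swap (⟨0, Nat.lt_of_lt_of_le Nat.zero_lt_two hN⟩ : Fin N) ⟨1, Nat.lt_of_lt_of_le Nat.one_lt_two hN⟩ a)
          (Equiv.swap (⟨0, Nat.lt_of_lt_of_le Nat.zero_lt_two hN⟩ : Fin N) ⟨1, Nat.lt_of_lt_of_le Nat.one_lt_two hN⟩ c) := by
  set σ := Equiv.swap (⟨0, Nat.lt_of_lt_of_le Nat.zero_lt_two hN⟩ : Fin N) ⟨1, Nat.lt_of_lt_of_le Nat.one_lt_two hN⟩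
  refine Finset.sum_congr rfl fun a _ => Finset.sum_congr rfl fun c _ => ?_
  calc ∑ a', ∑ c', U a c * ηup N a a' * ηup N c c' * U a' c'
      = ∑ a', U a c * ηup N a a' * U a' (σ c) := by
        refine Finset.sum_congr rfl fun a' _ => ?_
        rw [← sum_etaup_mul hN (fun x => U a' x) c, Finset.mul_sum]
        exact Finset.sum_congr rfl fun c' _ => by ring
    _ = U a c * ∑ a', ηup N a a' * U a' (σ c) := by
        rw [Finset.mul_sum]; exact Finset.sum_congr rfl fun a' _ => by ring
    _ = U a c * U (σ a) (σ c) := by rw [sum_etaup_mul hN (fun x => U x (σ c)) a]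

lemma quad2 {N : ℕ} (hN : 2 ≤ N) (T : Fin N → Fin N → ℝ) :
    (∑ a, ∑ b, ∑ a', ∑ b', T a b * ηup N a a' * ηup N b b' * T b' a')
    = ∑ a, ∑ b, T a b *
        T (Equiv.swap (⟨0, Nat.lt_of_lt_of_le Nat.zero_lt_two hN⟩ : Fin N) ⟨1, Nat.lt_of_lt_of_le Nat.one_lt_two hN⟩ b)
          (Equiv.swap (⟨0, Nat.lt_of_lt_of_le Nat.zero_lt_two hN⟩ : Fin N) ⟨1, Nat.lt_of_lt_of_le Nat.one_lt_two hN⟩ a) := by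
  set σ := Equiv.swap (⟨0, Nat.lt_of_lt_of_le Nat.zero_lt_two hN⟩ : Fin N) ⟨1, Nat.lt_of_lt_of_le Nat.one_lt_two hN⟩
  refine Finset.sum_congr rfl fun a _ => Finset.sum_congr rfl fun b _ => ?_
  calc ∑ a', ∑ b', T a b * ηup N a a' * ηup N b b' * T b' a'
      = ∑ a', T a b * ηup N a a' * T (σ b) a' := by
        refine Finset.sum_congr rfl fun a' _ => ?_
        rw [← sum_etaup_mul hN (fun x => T x a') b, Finset.mul_sum]
        exact Finset.sum_congr rfl fun b' _ => by ring
    _ = T a b * ∑ a', ηup N a a' * T (σ b) a' := by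
        rw [Finset.mul_sum]; exact Finset.sum_congr rfl fun a' _ => by ring
    _ = T a b * T (σ b) (σ a) := by rw [sum_etaup_mul hN (fun x => T (σ b) x) a]


/-- **Lemma 13** (`lemmarank2`): a bilinear form `T` on `ℝ^N` of boost order at most
zero with respect to a null frame (all components of positive boost weight vanish:
`T_{00} = T_{0i} = T_{i0} = 0`) whose scalar invariants `T⁽²⁾_{ac} T⁽²⁾ᵃᶜ` and
`T_{ab} Tᵇᵃ` both vanish has vanishing boost-weight-zero components as well:
`T_{01} = T_{10} = 0` and `T_{ij} = 0`; i.e. `T` has negative boost order along `ℓ`. -/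
theorem rank2_boost_order_zero_vsi (N : ℕ) (hN : 2 ≤ N)
    (T : Fin N → Fin N → ℝ)
    (hpos : ∀ a b : Fin N, 0 < bw a + bw b → T a b = 0)
    (h1 : (∑ a, ∑ c, ∑ a', ∑ c',
      sq2 N T a c * ηup N a a' * ηup N c c' * sq2 N T a' c') = 0)
    (h2 : (∑ a, ∑ b, ∑ a', ∑ b',
      T a b * ηup N a a' * ηup N b b' * T b' a') = 0) :
    T ⟨0, by omega⟩ ⟨1, by omega⟩ = 0 ∧ T ⟨1, by omega⟩ ⟨0, by omega⟩ = 0 ∧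
    (∀ i j : Fin N, 2 ≤ (i : ℕ) → 2 ≤ (j : ℕ) → T i j = 0) := by
  have hz0 : 0 < N := by omega
  have hz1 : 1 < N := by omega
  set z0 : Fin N := ⟨0, hz0⟩ with hz0def
  set z1 : Fin N := ⟨1, hz1⟩ with hz1def
  set σ : Equiv.Perm (Fin N) := Equiv.swap z0 z1 with hσdef
  have hv0 : (z0 : ℕ) = 0 := rfl
  have hv1 : (z1 : ℕ) = 1 := rfl
  have hσ0 : σ z0 = z1 := Equiv.swap_apply_left _ _
  have hσ1 : σ z1 = z0 := Equiv.swap_apply_right _ _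
  -- positive boost weight components vanish
  have hT0 : ∀ b : Fin N, b ≠ z1 → T z0 b = 0 := by
    intro b hb
    have hb' : (b : ℕ) ≠ 1 := fun h => hb (Fin.ext (h.trans hv1.symm))
    apply hpos
    simp only [bw, hv0]
    split_ifs <;> omega
  have hTr0 : ∀ a : Fin N, a ≠ z1 → T a z0 = 0 := by
    intro a ha
    have ha' : (a : ℕ) ≠ 1 := fun h => ha (Fin.ext (h.trans hv1.symm))
    apply hpos
    simp only [bw, hv0]
    split_ifs <;> omega
  -- the square S a c = sq2 with the metric contraction performed
  set S : Fin N → Fin N → ℝ := fun a c => ∑ b, T a b * T c (σ b) with hSdef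
  have hsq : ∀ a c, sq2 N T a c = S a c := fun a c => sq2_eq hN T a c
  have hsym : ∀ a c, S a c = S c a := by
    intro a c
    simp only [hSdef]
    rw [← Equiv.sum_comp σ (fun b => T c b * T a (σ b))]
    simp only [hσdef, Equiv.swap_apply_self]
    exact Finset.sum_congr rfl fun b _ => mul_comm _ _
  have hA : ∀ c : Fin N, c ≠ z1 → S z0 c = 0 := by
    intro c hc
    apply Finset.sum_eq_zero
    intro b _
    rcases eq_or_ne b z1 with rfl | hb
    · rw [hσ1, hTr0 c hc, mul_zero]
    · rw [hT0 b hb, zero_mul]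
  -- collapse the invariants
  rw [quad1 hN (sq2 N T)] at h1
  rw [quad2 hN T] at h2
  have H1 : ∑ a, ∑ c, S a c * S (σ a) (σ c) = 0 := by
    rw [← h1]
    exact Finset.sum_congr rfl fun a _ => Finset.sum_congr rfl fun c _ => by
      rw [hsq, hsq]
  have H2 : ∑ a, ∑ b, T a b * T (σ b) (σ a) = 0 := h2
  -- nonnegativity of the terms of H1
  have hnn1 : ∀ a c : Fin N, 0 ≤ S a c * S (σ a) (σ c) := by
    intro a c
    rcases eq_or_ne a z0 with rfl | ha0
    · rcases eq_or_ne c z1 with rfl | hc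
      · rw [hσ0, hσ1, hsym z1 z0]; exact mul_self_nonneg _
      · rw [hA c hc, zero_mul]
    rcases eq_or_ne a z1 with rfl | ha1
    · rw [hσ1]
      rcases eq_or_ne c z0 with rfl | hc0
      · rw [hσ0, hsym z1 z0]; exact mul_self_nonneg _
      · have hσc : σ c ≠ z1 := by
          intro h
          apply hc0
          have h2' := congrArg σ h
          rwa [hσdef, Equiv.swap_apply_self, ← hσdef, hσ1] at h2'
        rw [hA _ hσc, mul_zero]
    have ha : σ a = a := Equiv.swap_apply_of_ne_of_ne ha0 ha1
    rcases eq_or_ne c z0 with rfl | hc0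
    · rw [hsym a z0, hA a ha1, zero_mul]
    rcases eq_or_ne c z1 with rfl | hc1
    · rw [ha, hσ1, hsym a z0, hA a ha1, mul_zero]
    · have hc : σ c = c := Equiv.swap_apply_of_ne_of_ne hc0 hc1
      rw [ha, hc]; exact mul_self_nonneg _
  have H1' : ∀ a c : Fin N, S a c * S (σ a) (σ c) = 0 := by
    intro a c
    have h' := (Finset.sum_eq_zero_iff_of_nonneg
      (fun a _ => Finset.sum_nonneg fun c _ => hnn1 a c)).mp H1 a (Finset.mem_univ a)
    exact (Finset.sum_eq_zero_iff_of_nonneg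
      (fun c _ => hnn1 a c)).mp h' c (Finset.mem_univ c)
  -- spatial components vanish
  have hspatial : ∀ i j : Fin N, 2 ≤ (i : ℕ) → 2 ≤ (j : ℕ) → T i j = 0 := by
    intro i j hi hj
    have hi0 : i ≠ z0 := fun h => by rw [h] at hi; omega
    have hi1 : i ≠ z1 := fun h => by rw [h] at hi; omega
    have hj0 : j ≠ z0 := fun h => by rw [h] at hj; omega
    have hj1 : j ≠ z1 := fun h => by rw [h] at hj; omega
    have hσi : σ i = i := Equiv.swap_apply_of_ne_of_ne hi0 hi1
    have hSii : S i i = 0 := by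
      have h' := H1' i i
      rw [hσi] at h'
      exact mul_self_eq_zero.mp h'
    have hnnb : ∀ b : Fin N, 0 ≤ T i b * T i (σ b) := by
      intro b
      rcases eq_or_ne b z0 with rfl | hb0
      · rw [hTr0 i hi1, zero_mul]
      rcases eq_or_ne b z1 with rfl | hb1
      · rw [hσ1, hTr0 i hi1, mul_zero]
      · rw [Equiv.swap_apply_of_ne_of_ne hb0 hb1]; exact mul_self_nonneg _
    have hall := (Finset.sum_eq_zero_iff_of_nonneg
      (fun b _ => hnnb b)).mp hSii j (Finset.mem_univ j)
    rw [Equiv.swap_apply_of_ne_of_ne hj0 hj1] at hall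
    exact mul_self_eq_zero.mp hall
  -- nonnegativity of the terms of H2
  have hnn2 : ∀ a b : Fin N, 0 ≤ T a b * T (σ b) (σ a) := by
    intro a b
    rcases eq_or_ne b z0 with rfl | hb0
    · rcases eq_or_ne a z1 with rfl | ha1
      · rw [hσ0, hσ1]; exact mul_self_nonneg _
      · rw [hTr0 a ha1, zero_mul]
    rcases eq_or_ne b z1 with rfl | hb1
    · rcases eq_or_ne a z0 with rfl | ha0
      · rw [hσ1, hσ0]; exact mul_self_nonneg _
      · have hσa : σ a ≠ z1 := by
          intro h
          apply ha0
          have h2' := congrArg σ h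
          rwa [hσdef, Equiv.swap_apply_self, ← hσdef, hσ1] at h2'
        rw [hσ1, hT0 _ hσa, mul_zero]
    · have hσb : σ b = b := Equiv.swap_apply_of_ne_of_ne hb0 hb1
      rcases eq_or_ne a z0 with rfl | ha0
      · rw [hT0 b hb1, zero_mul]
      rcases eq_or_ne a z1 with rfl | ha1
      · rw [hσb, hσ1, hTr0 b hb1, mul_zero]
      · have ha2 : 2 ≤ (a : ℕ) := by
          have h0 : (a : ℕ) ≠ 0 := fun h => ha0 (Fin.ext (h.trans hv0.symm))
          have h1' : (a : ℕ) ≠ 1 := fun h => ha1 (Fin.ext (h.trans hv1.symm))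
          omega
        have hb2 : 2 ≤ (b : ℕ) := by
          have h0 : (b : ℕ) ≠ 0 := fun h => hb0 (Fin.ext (h.trans hv0.symm))
          have h1' : (b : ℕ) ≠ 1 := fun h => hb1 (Fin.ext (h.trans hv1.symm))
          omega
        rw [hspatial a b ha2 hb2, zero_mul]
  have H2' : ∀ a b : Fin N, T a b * T (σ b) (σ a) = 0 := by
    intro a b
    have h' := (Finset.sum_eq_zero_iff_of_nonneg
      (fun a _ => Finset.sum_nonneg fun b _ => hnn2 a b)).mp H2 a (Finset.mem_univ a)
    exact (Finset.sum_eq_zero_iff_of_nonneg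
      (fun b _ => hnn2 a b)).mp h' b (Finset.mem_univ b)
  have hT01 : T z0 z1 = 0 := by
    have h' := H2' z0 z1
    rw [hσ1, hσ0] at h'
    exact mul_self_eq_zero.mp h'
  have hT10 : T z1 z0 = 0 := by
    have h' := H2' z1 z0
    rw [hσ0, hσ1] at h'
    exact mul_self_eq_zero.mp h'
  exact ⟨hT01, hT10, hspatial⟩
end

section
/- Let 0 < p < q and let B be the symmetric bilinear form of signature (p,q) on ℝ^{p+q}. If (X_i)_{i∈I} is an arbitrary family of vectors with B(X_i, X_j) = 0 for all i, j ∈ I, then there exists T ∈ SO_{p,q} such that the transformed vectors Y_i = T X_i satisfy: for every i ∈ I, the λ-th and (λ+p)-th coordinates of Y_i coincide for each λ = 1,…,p, and every coordinate of Y_i with index greater than 2p vanishes. -/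
open Matrix

/-- The symmetric bilinear form of signature `(p,q)` on `ℝ^{p+q}`:
`B(x,y) = Σ_{λ<p} x_λ y_λ − Σ_{p≤λ<p+q} x_λ y_λ`. -/
def sigForm (p q : ℕ) (x y : Fin (p + q) → ℝ) : ℝ :=
  ∑ l : Fin (p + q), (if (l : ℕ) < p then (1 : ℝ) else -1) * x l * y l

section aux

variable {I : Type*} {q : ℕ}

/-- If two families have the same Gram matrix, there is a full linear isometry of
Euclidean space mapping one family to the other. -/
theorem sigForm.exists_isometry_map (a b : I → EuclideanSpace ℝ (Fin q))
    (hab : ∀ i j, inner ℝ (b i) (b j) = (inner ℝ (a i) (a j) : ℝ)) :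
    ∃ L : EuclideanSpace ℝ (Fin q) →ₗᵢ[ℝ] EuclideanSpace ℝ (Fin q), ∀ i, L (b i) = a i := by
  classical
  set S1 := Finsupp.linearCombination ℝ b with hS1
  set S2 := Finsupp.linearCombination ℝ a with hS2
  have key : ∀ c d : I →₀ ℝ, inner ℝ (S1 c) (S1 d) = (inner ℝ (S2 c) (S2 d) : ℝ) := by
    intro c d
    simp only [hS1, hS2, Finsupp.linearCombination_apply, Finsupp.sum, sum_inner, inner_sum,
      real_inner_smul_left, real_inner_smul_right, hab]
  have hker : LinearMap.ker S1 ≤ LinearMap.ker S2 := by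
    intro c hc
    rw [LinearMap.mem_ker] at hc ⊢
    have := key c c
    rw [hc, inner_zero_left] at this
    exact inner_self_eq_zero.mp this.symm
  set φ0 : ((I →₀ ℝ) ⧸ LinearMap.ker S1) →ₗ[ℝ] EuclideanSpace ℝ (Fin q) :=
    (LinearMap.ker S1).liftQ S2 hker with hφ0
  set e1 := S1.quotKerEquivRange with he1
  set ψ : ↥(LinearMap.range S1) →ₗ[ℝ] EuclideanSpace ℝ (Fin q) :=
    φ0 ∘ₗ (e1.symm : _ →ₗ[ℝ] _) with hψ
  have hψ_app : ∀ c : I →₀ ℝ, ψ ⟨S1 c, LinearMap.mem_range_self _ c⟩ = S2 c := by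
    intro c
    have : e1.symm ⟨S1 c, LinearMap.mem_range_self _ c⟩ = Submodule.Quotient.mk c := by
      apply e1.injective
      simp [he1, LinearMap.quotKerEquivRange_apply_mk]
    simp [hψ, this, hφ0, Submodule.liftQ_apply]
  have hψ_norm : ∀ x : ↥(LinearMap.range S1), ‖ψ x‖ = ‖x‖ := by
    rintro ⟨x, hx⟩
    obtain ⟨c, rfl⟩ := hx
    rw [hψ_app c]
    have := key c c
    rw [real_inner_self_eq_norm_sq, real_inner_self_eq_norm_sq] at this
    have h2 : ‖(⟨S1 c, LinearMap.mem_range_self _ c⟩ : ↥(LinearMap.range S1))‖ = ‖S1 c‖ := rfl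
    rw [h2]
    nlinarith [norm_nonneg (S1 c), norm_nonneg (S2 c)]
  set Φ : ↥(LinearMap.range S1) →ₗᵢ[ℝ] EuclideanSpace ℝ (Fin q) := ⟨ψ, hψ_norm⟩ with hΦ
  refine ⟨Φ.extend, fun i => ?_⟩
  have hb : b i = S1 (Finsupp.single i 1) := by simp [hS1]
  have hmem : b i ∈ LinearMap.range S1 := ⟨Finsupp.single i 1, hb.symm⟩
  have h3 : Φ.extend (b i) = Φ ⟨b i, hmem⟩ := LinearIsometry.extend_apply Φ ⟨b i, hmem⟩
  rw [h3]
  have h4 : (⟨b i, hmem⟩ : ↥(LinearMap.range S1)) =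
      ⟨S1 (Finsupp.single i 1), LinearMap.mem_range_self _ _⟩ := Subtype.ext hb
  show ψ _ = a i
  rw [h4, hψ_app]
  simp [hS2]

/-- Same Gram matrix plus a common zero coordinate yields a special-orthogonal matrix
mapping one family to the other. -/
theorem sigForm.exists_so_matrix (m0 : Fin q) (a b : I → (Fin q → ℝ))
    (hab : ∀ i j, ∑ m, a i m * a j m = ∑ m, b i m * b j m)
    (ha0 : ∀ i, a i m0 = 0) :
    ∃ H : Matrix (Fin q) (Fin q) ℝ, Hᵀ * H = 1 ∧ H.det = 1 ∧ ∀ i, H *ᵥ b i = a i := by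
  obtain ⟨L, hL⟩ := sigForm.exists_isometry_map (q := q) (fun i => WithLp.toLp 2 (a i)) (fun i => WithLp.toLp 2 (b i)) (by
    intro i j
    simp only [PiLp.inner_apply, RCLike.inner_apply, conj_trivial, WithLp.ofLp_toLp]
    rw [← hab j i])
  set H0 : Matrix (Fin q) (Fin q) ℝ :=
    LinearMap.toMatrix' ((WithLp.linearEquiv 2 ℝ (Fin q → ℝ)).toLinearMap ∘ₗ L.toLinearMap ∘ₗ
      (WithLp.linearEquiv 2 ℝ (Fin q → ℝ)).symm.toLinearMap) with hH0
  have h0v : ∀ v : Fin q → ℝ, H0 *ᵥ v = WithLp.ofLp (L (WithLp.toLp 2 v)) := by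
    intro v
    rw [hH0, ← Matrix.toLin'_apply, Matrix.toLin'_toMatrix']; rfl
  have hinner : ∀ v w : Fin q → ℝ, (H0 *ᵥ v) ⬝ᵥ (H0 *ᵥ w) = v ⬝ᵥ w := by
    intro v w
    have := L.inner_map_map (𝕜 := ℝ) (WithLp.toLp 2 v) (WithLp.toLp 2 w)
    simp only [PiLp.inner_apply, RCLike.inner_apply, conj_trivial, WithLp.ofLp_toLp] at this
    simp only [dotProduct, h0v]
    simpa only [mul_comm] using this
  have horth0 : H0ᵀ * H0 = 1 := by
    ext i j
    have := hinner (Pi.single i 1) (Pi.single j 1)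
    simp only [mulVec_single, MulOpposite.op_one, one_smul, Matrix.col_apply, dotProduct, mul_one, Pi.single_apply, transpose_apply,
      Matrix.mul_apply, Matrix.one_apply] at this ⊢
    rw [this]
    simp [eq_comm]
  have hdet0 : H0.det * H0.det = 1 := by
    have := congrArg Matrix.det horth0
    rwa [Matrix.det_mul, Matrix.det_transpose, Matrix.det_one] at this
  set F : Matrix (Fin q) (Fin q) ℝ := Matrix.diagonal (fun m => if m = m0 then H0.det else 1)
    with hF
  have hFF : F * F = 1 := by
    rw [hF, Matrix.diagonal_mul_diagonal]
    have : (fun m => (if m = m0 then H0.det else 1) * (if m = m0 then H0.det else 1))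
        = fun _ => (1 : ℝ) := funext fun m => by by_cases h : m = m0 <;> simp [h, hdet0]
    rw [this, Matrix.diagonal_one]
  refine ⟨F * H0, ?_, ?_, ?_⟩
  · rw [Matrix.transpose_mul, hF, Matrix.diagonal_transpose, ← hF, Matrix.mul_assoc,
      ← Matrix.mul_assoc F F H0, hFF, Matrix.one_mul, horth0]
  · rw [Matrix.det_mul, hF, Matrix.det_diagonal, Finset.prod_ite_eq' Finset.univ m0]
    simp [hdet0]
  · intro i
    rw [← Matrix.mulVec_mulVec, show H0 *ᵥ b i = a i from by rw [h0v]; exact congrArg WithLp.ofLp (hL i)]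
    ext m
    rw [hF, Matrix.mulVec_diagonal]
    by_cases h : m = m0
    · simp [h, ha0]
    · simp [h]

end aux

theorem sigForm_split (p q : ℕ) (x y : Fin (p + q) → ℝ) :
    sigForm p q x y = (fun l => x (Fin.castAdd q l)) ⬝ᵥ (fun l => y (Fin.castAdd q l))
      - (fun m => x (Fin.natAdd p m)) ⬝ᵥ (fun m => y (Fin.natAdd p m)) := by
  rw [sigForm, Fin.sum_univ_add]
  have h1 : ∑ l : Fin p, (if ((Fin.castAdd q l : Fin (p+q)) : ℕ) < p then (1:ℝ) else -1)
        * x (Fin.castAdd q l) * y (Fin.castAdd q l)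
      = ∑ l : Fin p, x (Fin.castAdd q l) * y (Fin.castAdd q l) :=
    Finset.sum_congr rfl fun l _ => by
      simp only [Fin.coe_castAdd]
      rw [if_pos l.isLt, one_mul]
  have h2 : ∑ m : Fin q, (if ((Fin.natAdd p m : Fin (p+q)) : ℕ) < p then (1:ℝ) else -1)
        * x (Fin.natAdd p m) * y (Fin.natAdd p m)
      = ∑ m : Fin q, -(x (Fin.natAdd p m) * y (Fin.natAdd p m)) :=
    Finset.sum_congr rfl fun m _ => by
      simp only [Fin.coe_natAdd]
      rw [if_neg (by omega)]; ring
  rw [h1, h2, Finset.sum_neg_distrib, sub_eq_add_neg, dotProduct, dotProduct]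

theorem sigForm_gram_eq {p q : ℕ} {I : Type*} (X : I → (Fin (p + q) → ℝ)) (hpq : p < q)
    (hX : ∀ i j : I, sigForm p q (X i) (X j) = 0) (i j : I) :
    ∑ m : Fin q, (if h : (m : ℕ) < p then X i (⟨m, by omega⟩ : Fin (p+q)) else 0)
        * (if h : (m : ℕ) < p then X j (⟨m, by omega⟩ : Fin (p+q)) else 0)
      = ∑ m : Fin q, X i (Fin.natAdd p m) * X j (Fin.natAdd p m) := by
  set g : ℕ → ℝ := fun n => if h : n < p then
    X i (⟨n, by omega⟩ : Fin (p+q)) * X j (⟨n, by omega⟩ : Fin (p+q)) else 0 with hg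
  have e1 : ∑ m : Fin q, (if h : (m : ℕ) < p then X i (⟨m, by omega⟩ : Fin (p+q)) else 0)
        * (if h : (m : ℕ) < p then X j (⟨m, by omega⟩ : Fin (p+q)) else 0)
      = ∑ n ∈ Finset.range q, g n := by
    rw [← Fin.sum_univ_eq_sum_range g q]
    refine Finset.sum_congr rfl fun m _ => ?_
    by_cases h : (m : ℕ) < p <;> simp [hg, h]
  have e2 : ∑ l : Fin p, X i (Fin.castAdd q l) * X j (Fin.castAdd q l)
      = ∑ n ∈ Finset.range p, g n := by
    rw [← Fin.sum_univ_eq_sum_range g p]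
    refine Finset.sum_congr rfl fun l _ => ?_
    rw [hg]
    simp only [dif_pos l.isLt]
    rfl
  have e3 : ∑ n ∈ Finset.range q, g n = ∑ n ∈ Finset.range p, g n :=
    (Finset.sum_subset (Finset.range_subset_range.mpr hpq.le)
      (fun n _ hn => by
        simp only [Finset.mem_range, not_lt] at hn
        rw [hg]; exact dif_neg (by omega))).symm
  have := hX i j
  rw [sigForm_split, sub_eq_zero, dotProduct, dotProduct] at this
  rw [e1, e3, ← e2, this]

/-- **Corollary A.3** (`cor:indefcoll`): for an arbitrary family of mutually orthogonal
null vectors `X_i` in `ℝ^{p,q}` (with `0 < p < q`) there is a `(p,q)`-isometry `T` of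
determinant `1` (an element of `SO_{p,q}`) such that the transformed vectors
`Y_i = T X_i` satisfy `(Y_i)_λ = (Y_i)_{λ+p}` for `λ = 0,…,p−1` (0-based) and
`(Y_i)_μ = 0` for all coordinates with index `μ ≥ 2p` (0-based). -/
theorem normalize_orthogonal_null_collection {p q : ℕ} (hp : 0 < p) (hpq : p < q)
    {I : Type*} (X : I → (Fin (p + q) → ℝ))
    (hX : ∀ i j : I, sigForm p q (X i) (X j) = 0) :
    ∃ T : Matrix (Fin (p + q)) (Fin (p + q)) ℝ, T.det = 1 ∧
      (∀ x y : Fin (p + q) → ℝ, sigForm p q (T *ᵥ x) (T *ᵥ y) = sigForm p q x y) ∧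
      ∀ i : I,
        (∀ lam : ℕ, ∀ h : lam < p,
          (T *ᵥ X i) ⟨lam, by omega⟩ = (T *ᵥ X i) ⟨lam + p, by omega⟩) ∧
        (∀ mu : Fin (p + q), 2 * p ≤ (mu : ℕ) → (T *ᵥ X i) mu = 0) := by
  classical
  set a : I → (Fin q → ℝ) :=
    fun i m => if h : (m : ℕ) < p then X i (⟨m, by omega⟩ : Fin (p+q)) else 0 with ha
  set b : I → (Fin q → ℝ) := fun i m => X i (Fin.natAdd p m) with hb
  obtain ⟨H, horth, hdetH, hmap⟩ := sigForm.exists_so_matrix (⟨q - 1, by omega⟩ : Fin q) a b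
    (fun i j => sigForm_gram_eq X hpq hX i j)
    (fun i => by rw [ha]; exact dif_neg (by show ¬ q - 1 < p; omega))
  set T : Matrix (Fin (p + q)) (Fin (p + q)) ℝ :=
    (Matrix.fromBlocks (1 : Matrix (Fin p) (Fin p) ℝ) 0 0 H).submatrix
      finSumFinEquiv.symm finSumFinEquiv.symm with hT
  have hTv : ∀ x : Fin (p+q) → ℝ, T *ᵥ x =
      (Sum.elim (fun l => x (Fin.castAdd q l)) (H *ᵥ fun m => x (Fin.natAdd p m)))
        ∘ finSumFinEquiv.symm := by
    intro x
    rw [hT, Matrix.submatrix_mulVec_equiv, Matrix.fromBlocks_mulVec]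
    simp only [Equiv.symm_symm]
    have hl : (x ∘ ⇑finSumFinEquiv) ∘ Sum.inl = fun l => x (Fin.castAdd q l) :=
      funext fun l => by simp
    have hr : (x ∘ ⇑finSumFinEquiv) ∘ Sum.inr = fun m => x (Fin.natAdd p m) :=
      funext fun m => by simp
    rw [hl, hr, Matrix.one_mulVec, Matrix.zero_mulVec, Matrix.zero_mulVec, add_zero, zero_add]
  have hTop : ∀ (x : Fin (p+q) → ℝ) (l : Fin p),
      (T *ᵥ x) (Fin.castAdd q l) = x (Fin.castAdd q l) := by
    intro x l
    rw [hTv]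
    simp [finSumFinEquiv_symm_apply_castAdd]
  have hBot : ∀ (x : Fin (p+q) → ℝ) (m : Fin q),
      (T *ᵥ x) (Fin.natAdd p m) = (H *ᵥ fun m' => x (Fin.natAdd p m')) m := by
    intro x m
    rw [hTv]
    simp [finSumFinEquiv_symm_apply_natAdd]
  have hdp : ∀ u v : Fin q → ℝ, (H *ᵥ u) ⬝ᵥ (H *ᵥ v) = u ⬝ᵥ v := by
    intro u v
    rw [Matrix.dotProduct_mulVec]
    have : (H *ᵥ u) ᵥ* H = u := by
      rw [← Matrix.mulVec_transpose, Matrix.mulVec_mulVec, horth, Matrix.one_mulVec]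
    rw [this]
  refine ⟨T, ?_, ?_, ?_⟩
  · rw [hT, Matrix.det_submatrix_equiv_self, Matrix.det_fromBlocks_zero₂₁, Matrix.det_one,
      one_mul, hdetH]
  · intro x y
    rw [sigForm_split, sigForm_split]
    have e1 : (fun l => (T *ᵥ x) (Fin.castAdd q l)) = fun l => x (Fin.castAdd q l) :=
      funext fun l => hTop x l
    have e2 : (fun m => (T *ᵥ x) (Fin.natAdd p m)) = H *ᵥ fun m' => x (Fin.natAdd p m') :=
      funext fun m => hBot x m
    have e3 : (fun l => (T *ᵥ y) (Fin.castAdd q l)) = fun l => y (Fin.castAdd q l) :=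
      funext fun l => hTop y l
    have e4 : (fun m => (T *ᵥ y) (Fin.natAdd p m)) = H *ᵥ fun m' => y (Fin.natAdd p m') :=
      funext fun m => hBot y m
    rw [e1, e2, e3, e4, hdp]
  · intro i
    constructor
    · intro lam hlam
      have hidx1 : (⟨lam, by omega⟩ : Fin (p + q)) = Fin.castAdd q ⟨lam, hlam⟩ := rfl
      have hidx2 : (⟨lam + p, by omega⟩ : Fin (p + q)) =
          Fin.natAdd p ⟨lam, by omega⟩ := by
        apply Fin.ext; simp [Fin.natAdd]; omega
      rw [hidx1, hidx2, hTop, hBot]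
      have := congrFun (hmap i) ⟨lam, by omega⟩
      rw [hb] at this
      rw [this, ha]
      simp only [dif_pos hlam]
      rfl
    · intro mu hmu
      have hple : p ≤ (mu : ℕ) := by omega
      have hidx : mu = Fin.natAdd p ⟨(mu : ℕ) - p, by omega⟩ := by
        apply Fin.ext; simp [Fin.natAdd]; omega
      rw [hidx, hBot]
      have := congrFun (hmap i) ⟨(mu : ℕ) - p, by omega⟩
      rw [hb] at this
      rw [this, ha]
      exact dif_neg (by show ¬ (mu : ℕ) - p < p; omega)
end

section
/- Let η be the Minkowski form on ℝ^N (Lorentz signature, N−1 positive and 1 negative square). If (K_λ)_{λ=1,…,r} is a linearly independent family of skew-symmetric bilinear forms on ℝ^N (bivectors) that are null and mutually orthogonal with respect to the bivector inner product, i.e. ⟨K_λ, K_μ⟩ = 0 for all λ, μ (including λ = μ), then r ≤ N − 1. -/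
open Matrix

/-- The standard Minkowski diagonal matrix `diag(1,…,1,−1)` (N−1 positive squares,
one negative square). -/
def minkDiag (N : ℕ) : Matrix (Fin N) (Fin N) ℝ :=
  Matrix.diagonal (fun i => if (i : ℕ) + 1 < N then 1 else -1)

/-- The bivector inner product `⟨J,K⟩ = (1/2) Σ_{a,b} J_{ab} K^{ab}`, where
`K^{ab} = (η⁻¹ K η⁻¹)_{ab}` is `K` with both indices raised by the inverse metric. -/
noncomputable def bivInner {N : ℕ} (η J K : Matrix (Fin N) (Fin N) ℝ) : ℝ :=
  (1 / 2 : ℝ) * ∑ a, ∑ b, J a b * (η⁻¹ * K * η⁻¹) a b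

lemma sum_mul_eq_trace {N : ℕ} (A B : Matrix (Fin N) (Fin N) ℝ) :
    ∑ a, ∑ b, A a b * B a b = Matrix.trace (A * Bᵀ) := by
  simp [Matrix.trace, Matrix.mul_apply, Matrix.diag]

lemma bivInner_trace {N : ℕ} (η J K : Matrix (Fin N) (Fin N) ℝ) :
    bivInner η J K = (1/2 : ℝ) * Matrix.trace (J * (η⁻¹ * K * η⁻¹)ᵀ) := by
  rw [bivInner, sum_mul_eq_trace]

lemma minkDiag_mul_self (N : ℕ) : minkDiag N * minkDiag N = 1 := by
  rw [minkDiag, Matrix.diagonal_mul_diagonal]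
  have : (fun i : Fin N => (if (i:ℕ)+1<N then (1:ℝ) else -1) * (if (i:ℕ)+1<N then 1 else -1))
      = fun _ => 1 := by
    funext i; by_cases h : (i:ℕ)+1<N <;> simp [h]
  rw [this, Matrix.diagonal_one]

lemma minkDiag_inv (N : ℕ) : (minkDiag N)⁻¹ = minkDiag N :=
  Matrix.inv_eq_right_inv (minkDiag_mul_self N)

lemma minkDiag_transpose (N : ℕ) : (minkDiag N)ᵀ = minkDiag N := by
  rw [minkDiag, Matrix.diagonal_transpose]

lemma bivInner_conj {N : ℕ} (η P J K : Matrix (Fin N) (Fin N) ℝ)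
    (hinv : η⁻¹ = P * minkDiag N * Pᵀ) :
    bivInner η J K = bivInner (minkDiag N) (Pᵀ * J * P) (Pᵀ * K * P) := by
  set D := minkDiag N with hD
  have hDT : Dᵀ = D := minkDiag_transpose N
  have hDinv : D⁻¹ = D := minkDiag_inv N
  rw [bivInner, bivInner, sum_mul_eq_trace, sum_mul_eq_trace, hinv, hDinv]
  rw [show (P * D * Pᵀ * K * (P * D * Pᵀ))ᵀ = P * D * Pᵀ * Kᵀ * (P * D * Pᵀ) by
    simp [Matrix.transpose_mul, hDT, Matrix.mul_assoc]]
  rw [show (D * (Pᵀ * K * P) * D)ᵀ = D * (Pᵀ * Kᵀ * P) * D by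
    simp [Matrix.transpose_mul, hDT, Matrix.mul_assoc]]
  rw [show J * (P * D * Pᵀ * Kᵀ * (P * D * Pᵀ)) = (J * (P * D * Pᵀ * Kᵀ * (P * D))) * Pᵀ by
    simp [Matrix.mul_assoc]]
  rw [Matrix.trace_mul_comm]
  congr 1
  simp [Matrix.mul_assoc]

lemma bivInner_sum_sum {N r : ℕ} (η : Matrix (Fin N) (Fin N) ℝ) (g : Fin r → ℝ)
    (K : Fin r → Matrix (Fin N) (Fin N) ℝ) :
    bivInner η (∑ l, g l • K l) (∑ m, g m • K m)
      = ∑ l, ∑ m, g l * g m * bivInner η (K l) (K m) := by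
  simp only [bivInner_trace]
  have h1 : (η⁻¹ * (∑ m, g m • K m) * η⁻¹)ᵀ = ∑ m, g m • (η⁻¹ * K m * η⁻¹)ᵀ := by
    simp [Finset.mul_sum, Finset.sum_mul, Matrix.transpose_sum, Matrix.mul_smul,
      Matrix.smul_mul]
  rw [h1, Finset.sum_mul_sum]
  simp only [smul_mul_assoc, mul_smul_comm, Matrix.trace_sum, Matrix.trace_smul,
    smul_smul, smul_eq_mul, Finset.mul_sum]
  refine Finset.sum_congr rfl fun l _ => Finset.sum_congr rfl fun m _ => ?_
  ring

lemma key_lemma (n : ℕ) (M : Matrix (Fin (n+1)) (Fin (n+1)) ℝ)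
    (hskew : Mᵀ = -M)
    (hnull : bivInner (minkDiag (n+1)) M M = 0)
    (hlast : ∀ a, M a (Fin.last n) = 0) : M = 0 := by
  have hlast' : ∀ b, M (Fin.last n) b = 0 := by
    intro b
    have := congrFun (congrFun hskew b) (Fin.last n)
    simp [Matrix.transpose_apply, hlast b] at this
    linarith
  set ε : Fin (n+1) → ℝ := fun i => if (i : ℕ) + 1 < n + 1 then 1 else -1 with hε
  have hentry : ∀ a b, ((minkDiag (n+1))⁻¹ * M * (minkDiag (n+1))⁻¹) a b
      = ε a * M a b * ε b := by
    intro a b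
    rw [minkDiag_inv, minkDiag, Matrix.mul_diagonal, Matrix.diagonal_mul]
  have hterm : ∀ a b, M a b * (ε a * M a b * ε b) = M a b ^ 2 := by
    intro a b
    rcases eq_or_ne a (Fin.last n) with ha | ha
    · rw [ha, hlast' b]; ring
    · rcases eq_or_ne b (Fin.last n) with hb | hb
      · rw [hb, hlast a]; ring
      · have ha' : (a : ℕ) < n := Fin.val_lt_last ha
        have hb' : (b : ℕ) < n := Fin.val_lt_last hb
        simp only [hε]
        rw [if_pos (by omega : (a:ℕ)+1 < n+1), if_pos (by omega : (b:ℕ)+1 < n+1)]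
        ring
  have hsum : ∑ a, ∑ b, M a b ^ 2 = 0 := by
    have heq : bivInner (minkDiag (n+1)) M M
        = (1/2 : ℝ) * ∑ a, ∑ b, M a b ^ 2 := by
      rw [bivInner]
      congr 1
      refine Finset.sum_congr rfl fun a _ => Finset.sum_congr rfl fun b _ => ?_
      rw [hentry, hterm]
    rw [heq] at hnull
    linarith
  have hz : ∀ a ∈ Finset.univ, ∀ b ∈ Finset.univ, (M a b)^2 = (0:ℝ) := by
    have h1 := (Finset.sum_eq_zero_iff_of_nonneg (fun a _ =>
      Finset.sum_nonneg (fun b _ => sq_nonneg (M a b)))).mp hsum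
    intro a ha b hb
    exact (Finset.sum_eq_zero_iff_of_nonneg (fun b _ => sq_nonneg (M a b))).mp
      (h1 a ha) b hb
  ext a b
  have := hz a (Finset.mem_univ a) b (Finset.mem_univ b)
  simpa using pow_eq_zero_iff (n := 2) (by norm_num) |>.mp this

/-- **Proposition C.2** (`prop:nullbv`): a linearly independent family of null,
mutually orthogonal bivectors (skew-symmetric bilinear forms) on `N`-dimensional
Minkowski space has at most `N − 1` members. -/
theorem null_orthogonal_bivectors_le (N r : ℕ) (η : Matrix (Fin N) (Fin N) ℝ)
    (hηsymm : η.IsSymm)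
    (hsig : ∃ P : Matrix (Fin N) (Fin N) ℝ, IsUnit P.det ∧ Pᵀ * η * P = minkDiag N)
    (K : Fin r → Matrix (Fin N) (Fin N) ℝ)
    (hskew : ∀ l, (K l)ᵀ = -(K l))
    (hli : LinearIndependent ℝ K)
    (horth : ∀ l m : Fin r, bivInner η (K l) (K m) = 0) :
    r ≤ N - 1 := by
  rcases Nat.eq_zero_or_pos N with hN | hN
  · -- N = 0 : the matrix space is trivial, so r = 0
    subst hN
    rcases Nat.eq_zero_or_pos r with hr | hr
    · omega
    · exfalso
      have h0 : K ⟨0, hr⟩ = 0 := by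
        ext a b; exact a.elim0
      exact hli.ne_zero ⟨0, hr⟩ h0
  obtain ⟨n, rfl⟩ : ∃ n, N = n + 1 := ⟨N - 1, by omega⟩
  obtain ⟨P, hPu, hPD⟩ := hsig
  letI : Invertible P := P.invertibleOfIsUnitDet hPu
  letI : Invertible Pᵀ := Matrix.invertibleTranspose P
  set D := minkDiag (n+1) with hD
  -- η⁻¹ = P D Pᵀ
  have h1 : η * (P * D * Pᵀ) = 1 := by
    have h2 : Pᵀ * (η * (P * D * Pᵀ)) = Pᵀ := by
      calc Pᵀ * (η * (P * D * Pᵀ)) = (Pᵀ * η * P) * D * Pᵀ := by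
            simp only [Matrix.mul_assoc]
        _ = D * D * Pᵀ := by rw [hPD]
        _ = Pᵀ := by rw [hD, minkDiag_mul_self, one_mul]
    calc η * (P * D * Pᵀ) = ⅟Pᵀ * (Pᵀ * (η * (P * D * Pᵀ))) := by
          rw [invOf_mul_cancel_left]
      _ = ⅟Pᵀ * Pᵀ := by rw [h2]
      _ = 1 := invOf_mul_self _
  have hinv : η⁻¹ = P * D * Pᵀ := Matrix.inv_eq_right_inv h1
  -- the family of "time columns" of the transformed bivectors
  set v : Fin r → (Fin n → ℝ) :=
    fun l a => (Pᵀ * K l * P) a.castSucc (Fin.last n) with hv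
  have hvli : LinearIndependent ℝ v := by
    rw [Fintype.linearIndependent_iff]
    intro g hg
    set M : Matrix (Fin (n+1)) (Fin (n+1)) ℝ := ∑ l, g l • K l with hM
    have hdistr : Pᵀ * M * P = ∑ l, g l • (Pᵀ * K l * P) := by
      rw [hM, Finset.mul_sum, Finset.sum_mul]
      refine Finset.sum_congr rfl fun l _ => ?_
      simp [Matrix.mul_smul, Matrix.smul_mul]
    have hMskew : Mᵀ = -M := by
      rw [hM, Matrix.transpose_sum]
      rw [show -∑ l, g l • K l = ∑ l, -(g l • K l) by rw [Finset.sum_neg_distrib]]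
      refine Finset.sum_congr rfl fun l _ => ?_
      rw [Matrix.transpose_smul, hskew l, smul_neg]
    have hM'skew : (Pᵀ * M * P)ᵀ = -(Pᵀ * M * P) := by
      calc (Pᵀ * M * P)ᵀ = Pᵀ * Mᵀ * P := by
            simp [Matrix.transpose_mul, Matrix.mul_assoc]
        _ = -(Pᵀ * M * P) := by rw [hMskew]; simp [Matrix.mul_neg, Matrix.neg_mul]
    have hnull : bivInner D (Pᵀ * M * P) (Pᵀ * M * P) = 0 := by
      rw [← bivInner_conj η P M M hinv, hM, bivInner_sum_sum]
      simp [horth]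
    have hlastcol : ∀ a, (Pᵀ * M * P) a (Fin.last n) = 0 := by
      intro a
      induction a using Fin.lastCases with
      | last =>
        have := congrFun (congrFun hM'skew (Fin.last n)) (Fin.last n)
        simp [Matrix.transpose_apply] at this
        linarith
      | cast i =>
        have hgi := congrFun hg i
        simp only [Finset.sum_apply, Pi.smul_apply, smul_eq_mul, Pi.zero_apply, hv] at hgi
        rw [hdistr]
        simpa [Matrix.sum_apply, Matrix.smul_apply] using hgi
    have hM' : Pᵀ * M * P = 0 := key_lemma n _ hM'skew hnull hlastcol
    have hM0 : M = 0 := by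
      have h3 := congrArg (fun X => ⅟Pᵀ * X * ⅟P) hM'
      simpa [Matrix.mul_assoc, invOf_mul_cancel_left, mul_invOf_cancel_left,
        Matrix.mul_zero, Matrix.zero_mul, invOf_mul_self, mul_invOf_self] using h3
    exact fun l => Fintype.linearIndependent_iff.mp hli g hM0 l
  have hcard := hvli.fintype_card_le_finrank
  simp at hcard
  omega
end
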